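/- Let q be a prime power and let F_q be a finite field with q elements. Then there exist a natural number n with 3 ≤ n ≤ 2·√((q+1)·ln(q+1)) + 2 and an F_q-linear subspace C of F_q^n of dimension n − 3 such that every vector of F_q^n is at Hamming distance at most 2 from some element of C (i.e., C is a q-ary linear code of length n, codimension 3, and covering radius at most 2). In particular, the length function ℓ(2,3,q) satisfies ℓ(2,3,q) ≤ 2·√((q+1)·ln(q+1)) + 2. -/

import Mathlib

open Finset

lemma hammingDist_le_two' {n : ℕ} {F : Type*} [DecidableEq F] (v c : Fin n → F) (i j : Fin n)
    (h : ∀ k, v k ≠ c k → k = i ∨ k = j) : hammingDist v c ≤ 2 := by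
  classical
  have hsub : ({k | v k ≠ c k} : Finset (Fin n)) ⊆ {i, j} := by
    intro k hk
    simp only [Finset.mem_filter, Finset.mem_univ, true_and] at hk
    simpa [Finset.mem_insert, Finset.mem_singleton] using h k hk
  calc hammingDist v c ≤ ({i, j} : Finset (Fin n)).card := Finset.card_le_card hsub
    _ ≤ 2 := by
        have := Finset.card_insert_le i ({j} : Finset (Fin n))
        simpa using this

lemma code_of_columns {F : Type*} [Field F] [Fintype F] [DecidableEq F] {n : ℕ} (hn : 3 ≤ n)
    (h : Fin n → (Fin 3 → F))
    (cover : ∀ s : Fin 3 → F, ∃ i j : Fin n, i ≠ j ∧ ∃ a b : F, s = a • h i + b • h j) :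
    ∃ C : Submodule F (Fin n → F), Module.finrank F C = n - 3 ∧
      ∀ v : Fin n → F, ∃ c ∈ C, hammingDist v c ≤ 2 := by
  classical
  let φ : (Fin n → F) →ₗ[F] (Fin 3 → F) :=
    { toFun := fun v => ∑ i, v i • h i
      map_add' := by
        intro v w
        simp [add_smul, Finset.sum_add_distrib]
      map_smul' := by
        intro c v
        simp [Finset.smul_sum, smul_smul] }
  have hsingle : ∀ (i : Fin n) (a : F), φ (Pi.single i a) = a • h i := by
    intro i a
    have : φ (Pi.single i a) = ∑ k, (Pi.single i a : Fin n → F) k • h k := rfl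
    rw [this, Finset.sum_eq_single i]
    · simp
    · intro b _ hb
      rw [Pi.single_eq_of_ne hb, zero_smul]
    · intro hi; exact absurd (Finset.mem_univ i) hi
  have hφv : ∀ (i j : Fin n) (a b : F), φ (Pi.single i a + Pi.single j b) = a • h i + b • h j := by
    intro i j a b
    rw [map_add, hsingle, hsingle]
  have hrange : LinearMap.range φ = ⊤ := by
    rw [LinearMap.range_eq_top]
    intro s
    obtain ⟨i, j, hij, a, b, hs⟩ := cover s
    exact ⟨Pi.single i a + Pi.single j b, ((hφv i j a b).trans hs.symm)⟩
  refine ⟨LinearMap.ker φ, ?_, ?_⟩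
  · have hrn := LinearMap.finrank_range_add_finrank_ker φ
    rw [hrange, finrank_top] at hrn
    have h3 : Module.finrank F (Fin 3 → F) = 3 := by
      simp [Module.finrank_pi]
    have hnn : Module.finrank F (Fin n → F) = n := by
      simp [Module.finrank_pi]
    rw [h3, hnn] at hrn
    omega
  · intro v
    obtain ⟨i, j, hij, a, b, hs⟩ := cover (φ v)
    refine ⟨v - (Pi.single i a + Pi.single j b), ?_, ?_⟩
    · rw [LinearMap.mem_ker, map_sub, hφv, ← hs, sub_self]
    · apply hammingDist_le_two' v _ i j
      intro k hk
      by_contra hcon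
      push_neg at hcon
      apply hk
      simp [Pi.single_eq_of_ne hcon.1, Pi.single_eq_of_ne hcon.2]

lemma exists_good (F : Type*) [Field F] [Fintype F] [DecidableEq F] (m : ℕ)
    (hC2 : (Fintype.card F)^2 * ((Fintype.card F - 1).descFactorial m)^2
        < (Fintype.card F).descFactorial m * (Fintype.card F)^m) :
    ∃ (t : Fin m ↪ F) (u : Fin m → F), ∀ y z : F,
      (∃ i, t i = y) ∨ (∃ i, u i = z) ∨
      (∃ i j, i ≠ j ∧ t i ≠ y ∧ t j ≠ y ∧
        (u i - z) * (t j - y) = (u j - z) * (t i - y)) := by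
  classical
  set q := Fintype.card F with hq
  -- the bad finsets
  let Bad : F → F → Finset ((Fin m ↪ F) × (Fin m → F)) := fun y z =>
    Finset.univ.filter (fun ω => (∀ i, ω.1 i ≠ y) ∧ (∀ i, ω.2 i ≠ z) ∧
      ∀ i j, i ≠ j → (ω.2 i - z) * (ω.1 j - y) ≠ (ω.2 j - z) * (ω.1 i - y))
  have hbadcard : ∀ y z, (Bad y z).card ≤ ((q - 1).descFactorial m)^2 := by
    intro y z
    -- injection into pairs of embeddings
    have hmem : ∀ ω ∈ Bad y z, (∀ i, ω.1 i ≠ y) ∧ (∀ i, ω.2 i ≠ z) ∧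
        ∀ i j, i ≠ j → (ω.2 i - z) * (ω.1 j - y) ≠ (ω.2 j - z) * (ω.1 i - y) := by
      intro ω hω
      simpa only [Bad, Finset.mem_filter, Finset.mem_univ, true_and] using hω
    have hinj : ∃ Φ : {ω // ω ∈ Bad y z} →
        ((Fin m ↪ {x : F // x ≠ y}) × (Fin m ↪ {x : F // x ≠ 0})),
        Function.Injective Φ := by
      refine ⟨fun ωh => ⟨⟨fun i => ⟨ωh.1.1 i, (hmem ωh.1 ωh.2).1 i⟩, ?_⟩,
        ⟨fun i => ⟨(ωh.1.2 i - z) / (ωh.1.1 i - y), ?_⟩, ?_⟩⟩, ?_⟩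
      · intro a b hab
        exact ωh.1.1.injective (by simpa using congrArg Subtype.val hab)
      · exact div_ne_zero (sub_ne_zero.mpr ((hmem ωh.1 ωh.2).2.1 i))
          (sub_ne_zero.mpr ((hmem ωh.1 ωh.2).1 i))
      · intro a b hab
        by_contra hne
        apply (hmem ωh.1 ωh.2).2.2 a b hne
        have hab' : (ωh.1.2 a - z) / (ωh.1.1 a - y) = (ωh.1.2 b - z) / (ωh.1.1 b - y) := by
          simpa using congrArg Subtype.val hab
        rw [div_eq_div_iff (sub_ne_zero.mpr ((hmem ωh.1 ωh.2).1 a))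
          (sub_ne_zero.mpr ((hmem ωh.1 ωh.2).1 b))] at hab'
        exact hab'
      · rintro ⟨ω, hω⟩ ⟨ω', hω'⟩ heq
        obtain ⟨hA, hB, hC⟩ := hmem ω hω
        simp only [Prod.mk.injEq] at heq
        obtain ⟨h1, h2⟩ := heq
        have ht : ω.1 = ω'.1 := by
          ext i
          exact congrArg Subtype.val (congrFun (congrArg DFunLike.coe h1) i)
        have hu : ω.2 = ω'.2 := by
          funext i
          have hs : (ω.2 i - z) / (ω.1 i - y) = (ω'.2 i - z) / (ω'.1 i - y) :=
            congrArg Subtype.val (congrFun (congrArg DFunLike.coe h2) i)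
          have hty : ω.1 i = ω'.1 i := congrFun (congrArg DFunLike.coe ht) i
          rw [← hty] at hs
          have hden : ω.1 i - y ≠ 0 := sub_ne_zero.mpr (hA i)
          field_simp at hs
          exact sub_left_inj.mp hs
        apply Subtype.ext
        exact Prod.ext ht hu
    obtain ⟨Φ, hΦ⟩ := hinj
    have := Fintype.card_le_of_injective Φ hΦ
    rw [Fintype.card_coe] at this
    refine this.trans ?_
    rw [Fintype.card_prod, Fintype.card_embedding_eq, Fintype.card_embedding_eq]
    have hcy : ∀ w : F, Fintype.card {x : F // x ≠ w} = q - 1 := by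
      intro w
      rw [Fintype.card_subtype]
      rw [show Finset.filter (fun x : F => x ≠ w) Finset.univ = Finset.univ.erase w from
        Finset.filter_ne' Finset.univ w]
      rw [Finset.card_erase_of_mem (Finset.mem_univ w), Finset.card_univ]
    rw [hcy y, hcy 0, Fintype.card_fin, sq]
  -- union bound
  let AllBad : Finset ((Fin m ↪ F) × (Fin m → F)) :=
    (Finset.univ : Finset (F × F)).biUnion (fun p => Bad p.1 p.2)
  have hAllcard : AllBad.card < Fintype.card ((Fin m ↪ F) × (Fin m → F)) := by
    have h1 : AllBad.card ≤ q^2 * ((q - 1).descFactorial m)^2 := by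
      refine (Finset.card_biUnion_le).trans ?_
      calc ∑ p : F × F, (Bad p.1 p.2).card
          ≤ ∑ _p : F × F, ((q - 1).descFactorial m)^2 :=
            Finset.sum_le_sum (fun p _ => hbadcard p.1 p.2)
        _ = q^2 * ((q - 1).descFactorial m)^2 := by
            rw [Finset.sum_const, Finset.card_univ, Fintype.card_prod, smul_eq_mul, ← hq]
            ring
    have h2 : Fintype.card ((Fin m ↪ F) × (Fin m → F)) = q.descFactorial m * q^m := by
      rw [Fintype.card_prod, Fintype.card_embedding_eq, Fintype.card_fun, Fintype.card_fin]
    omega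
  have hex : ∃ ω : (Fin m ↪ F) × (Fin m → F), ω ∉ AllBad := by
    by_contra hcon
    push_neg at hcon
    have : (Finset.univ : Finset ((Fin m ↪ F) × (Fin m → F))) ⊆ AllBad := fun ω _ => hcon ω
    have := Finset.card_le_card this
    rw [Finset.card_univ] at this
    omega
  obtain ⟨ω, hω⟩ := hex
  refine ⟨ω.1, ω.2, ?_⟩
  intro y z
  have hnotbad : ω ∉ Bad y z := by
    intro hmem
    exact hω (Finset.mem_biUnion.mpr ⟨(y, z), Finset.mem_univ _, hmem⟩)
  simp only [Bad, Finset.mem_filter, Finset.mem_univ, true_and] at hnotbad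
  by_cases hA : ∀ i, ω.1 i ≠ y
  · by_cases hB : ∀ i, ω.2 i ≠ z
    · right; right
      have hC : ¬ ∀ i j, i ≠ j → (ω.2 i - z) * (ω.1 j - y) ≠ (ω.2 j - z) * (ω.1 i - y) := by
        intro hC
        exact hnotbad ⟨hA, hB, hC⟩
      push_neg at hC
      obtain ⟨i, j, hij, hcross⟩ := hC
      exact ⟨i, j, hij, hA i, hA j, hcross⟩
    · right; left
      push_neg at hB
      exact hB
  · left
    push_neg at hA
    exact hA

lemma exists_columns (F : Type*) [Field F] [Fintype F] [DecidableEq F] (m : ℕ)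
    (hC2 : (Fintype.card F)^2 * ((Fintype.card F - 1).descFactorial m)^2
        < (Fintype.card F).descFactorial m * (Fintype.card F)^m) :
    ∃ h : Fin (m + 2) → (Fin 3 → F), ∀ s : Fin 3 → F,
      ∃ i j : Fin (m + 2), i ≠ j ∧ ∃ a b : F, s = a • h i + b • h j := by
  classical
  obtain ⟨t, u, hgood⟩ := exists_good F m hC2
  let emb : Fin m → Fin (m + 2) := fun i => ⟨i, by omega⟩
  let E2 : Fin (m + 2) := ⟨m, by omega⟩
  let E3 : Fin (m + 2) := ⟨m + 1, by omega⟩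
  let h : Fin (m + 2) → (Fin 3 → F) := fun k =>
    if hk : (k : ℕ) < m then ![1, t ⟨k, hk⟩, u ⟨k, hk⟩]
    else if (k : ℕ) = m then ![0, 1, 0] else ![0, 0, 1]
  have hhe : ∀ i : Fin m, h (emb i) = ![1, t i, u i] := by
    intro i
    simp only [h, emb]
    rw [dif_pos i.isLt]
  have hh2 : h E2 = ![0, 1, 0] := by
    simp only [h, E2]
    simp
  have hh3 : h E3 = ![0, 0, 1] := by
    simp only [h, E3]
    simp
  have hne2 : ∀ i : Fin m, emb i ≠ E2 := by
    intro i heq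
    have := congrArg Fin.val heq
    simp only [emb, E2] at this
    omega
  have hne3 : ∀ i : Fin m, emb i ≠ E3 := by
    intro i heq
    have := congrArg Fin.val heq
    simp only [emb, E3] at this
    omega
  have hembinj : ∀ i j : Fin m, i ≠ j → emb i ≠ emb j := by
    intro i j hij heq
    apply hij
    have := congrArg Fin.val heq
    simp only [emb] at this
    exact Fin.ext this
  refine ⟨h, ?_⟩
  intro s
  by_cases h0 : s 0 = 0
  · refine ⟨E2, E3, ?_, s 1, s 2, ?_⟩
    · intro heq
      have := congrArg Fin.val heq
      simp only [E2, E3] at this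
      omega
    · rw [hh2, hh3]
      funext k
      fin_cases k <;> simp [h0]
  · set y := s 1 / s 0 with hy
    set z := s 2 / s 0 with hz
    rcases hgood y z with ⟨i, hti⟩ | ⟨i, hui⟩ | ⟨i, j, hij, htiy, htjy, hcross⟩
    · -- t i = y : use columns emb i and E3
      refine ⟨emb i, E3, hne3 i, s 0, s 2 - s 0 * u i, ?_⟩
      rw [hhe, hh3]
      funext k
      fin_cases k
      · simp
      · simp only [Pi.add_apply, Pi.smul_apply, smul_eq_mul]
        show s 1 = s 0 * t i + (s 2 - s 0 * u i) * 0
        rw [hti, hy]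
        field_simp
        ring
      · simp only [Pi.add_apply, Pi.smul_apply, smul_eq_mul]
        show s 2 = s 0 * u i + (s 2 - s 0 * u i) * 1
        ring
    · -- u i = z : use columns emb i and E2
      refine ⟨emb i, E2, hne2 i, s 0, s 1 - s 0 * t i, ?_⟩
      rw [hhe, hh2]
      funext k
      fin_cases k
      · simp
      · simp only [Pi.add_apply, Pi.smul_apply, smul_eq_mul]
        show s 1 = s 0 * t i + (s 1 - s 0 * t i) * 1
        ring
      · simp only [Pi.add_apply, Pi.smul_apply, smul_eq_mul]
        show s 2 = s 0 * u i + (s 1 - s 0 * t i) * 0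
        rw [hui, hz]
        field_simp
        ring
    · -- two collinear points
      have htij : t j - t i ≠ 0 := sub_ne_zero.mpr (fun heq => hij (t.injective heq.symm))
      have hdi : t i - y ≠ 0 := sub_ne_zero.mpr htiy
      have hdj : t j - y ≠ 0 := sub_ne_zero.mpr htjy
      set lam := (u i - z) / (t i - y) with hlam
      have hui' : u i = z + lam * (t i - y) := by
        rw [hlam]
        field_simp
        ring
      have huj' : u j = z + lam * (t j - y) := by
        rw [hlam]
        field_simp
        linear_combination -hcross
      set a := s 0 * (t j - y) / (t j - t i) with ha
      set b := s 0 * (y - t i) / (t j - t i) with hb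
      have hab : a + b = s 0 := by
        rw [ha, hb]
        field_simp
        ring
      have h1 : a * t i + b * t j = s 0 * y := by
        rw [ha, hb]
        field_simp
        ring
      have hsy : s 0 * y = s 1 := by
        rw [hy]; field_simp
      have hsz : s 0 * z = s 2 := by
        rw [hz]; field_simp
      refine ⟨emb i, emb j, hembinj i j hij, a, b, ?_⟩
      rw [hhe, hhe]
      funext k
      fin_cases k
      · simp only [Pi.add_apply, Pi.smul_apply, smul_eq_mul]
        show s 0 = a * 1 + b * 1
        rw [mul_one, mul_one, hab]
      · simp only [Pi.add_apply, Pi.smul_apply, smul_eq_mul]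
        show s 1 = a * t i + b * t j
        rw [h1, hsy]
      · simp only [Pi.add_apply, Pi.smul_apply, smul_eq_mul]
        show s 2 = a * u i + b * u j
        rw [hui', huj', ← hsz]
        have : a * (z + lam * (t i - y)) + b * (z + lam * (t j - y))
            = (a + b) * z + lam * ((a * t i + b * t j) - y * (a + b)) := by ring
        rw [this, hab, h1]
        ring

set_option maxHeartbeats 2000000 in
lemma numeric_large (q : ℕ) (hq : 100 ≤ q) :
    ∃ m : ℕ, 1 ≤ m ∧ ((m : ℝ))^2 ≤ 4 * ((q:ℝ)+1) * Real.log ((q:ℝ)+1) ∧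
      q^2 * ((q-1).descFactorial m)^2 < q.descFactorial m * q^m := by
  have hq0 : (0:ℝ) < (q:ℝ) := by
    have : (0:ℕ) < q := by omega
    exact_mod_cast this
  have hq100 : (100:ℝ) ≤ (q:ℝ) := by exact_mod_cast hq
  have hq1pos : (0:ℝ) < (q:ℝ) + 1 := by linarith
  set L := Real.log ((q:ℝ)+1) with hL
  have hL4 : (4:ℝ) ≤ L := by
    have h26 : (2:ℝ)^6 ≤ (q:ℝ)+1 := by norm_num; linarith
    have hlog2 : (0.6931471803 : ℝ) < Real.log 2 := Real.log_two_gt_d9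
    calc (4:ℝ) ≤ 6 * 0.6931471803 := by norm_num
      _ ≤ 6 * Real.log 2 := by linarith
      _ = Real.log (2^6) := by rw [Real.log_pow]; push_cast; ring
      _ ≤ L := Real.log_le_log (by norm_num) h26
  have hLq : Real.log (q:ℝ) ≤ L := Real.log_le_log hq0 (by linarith)
  have hLqlt : Real.log (q:ℝ) < L := by
    have := Real.log_lt_log hq0 (by linarith : (q:ℝ) < (q:ℝ)+1)
    exact this
  have hlogqpos : 0 < Real.log (q:ℝ) := Real.log_pos (by linarith)
  set x := ((q:ℝ)+1) * L with hx
  have hxpos : (0:ℝ) < x := by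
    apply mul_pos hq1pos
    linarith
  have hx400 : (400:ℝ) ≤ x := by
    have : ((q:ℝ)+1) * 4 ≤ ((q:ℝ)+1) * L := by
      apply mul_le_mul_of_nonneg_left hL4 (le_of_lt hq1pos)
    nlinarith
  set s := Real.sqrt x with hs
  have hs0 : 0 ≤ s := Real.sqrt_nonneg x
  have hssq : s^2 = x := Real.sq_sqrt (le_of_lt hxpos)
  have hs20 : (20:ℝ) ≤ s := by
    nlinarith [hssq, hx400, hs0]
  set m := Nat.floor (2 * s) with hm
  have hmle : (m:ℝ) ≤ 2 * s := Nat.floor_le (by positivity)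
  have hmgt : 2 * s - 1 < (m:ℝ) := by
    have := Nat.lt_floor_add_one (2 * s)
    linarith
  have hm1 : 1 ≤ m := by
    have : (1:ℝ) ≤ (m:ℝ) := by linarith
    exact_mod_cast this
  have hC1 : ((m:ℝ))^2 ≤ 4 * ((q:ℝ)+1) * L := by
    have h1 : ((m:ℝ))^2 ≤ (2*s)^2 := by
      apply pow_le_pow_left₀ (by positivity) hmle
    calc ((m:ℝ))^2 ≤ (2*s)^2 := h1
      _ = 4 * x := by nlinarith [hssq]
      _ = 4 * ((q:ℝ)+1) * L := by rw [hx]; ring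
  -- m < q
  have hmq : m < q := by
    have hsq1 : Real.sqrt ((q:ℝ)+1) ^ 2 = (q:ℝ)+1 := Real.sq_sqrt (le_of_lt hq1pos)
    have hsq1nn : (0:ℝ) ≤ Real.sqrt ((q:ℝ)+1) := Real.sqrt_nonneg _
    have hlogs : L ≤ 2 * Real.sqrt ((q:ℝ)+1) - 2 := by
      have hspos : 0 < Real.sqrt ((q:ℝ)+1) := by nlinarith [hsq1]
      have h1 : Real.log (Real.sqrt ((q:ℝ)+1)) ≤ Real.sqrt ((q:ℝ)+1) - 1 :=
        Real.log_le_sub_one_of_pos hspos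
      have h2 : Real.log (Real.sqrt ((q:ℝ)+1)) = L / 2 := by
        rw [hL, Real.log_sqrt (le_of_lt hq1pos)]
      linarith
    have ha : 100 * (q:ℝ)^3 ≤ (q:ℝ)^4 := by nlinarith [hq100, pow_nonneg (le_of_lt hq0) 3]
    have hc : 100 * (q:ℝ)^2 ≤ (q:ℝ)^3 := by nlinarith [hq100, pow_nonneg (le_of_lt hq0) 2]
    have hd : 100 * (q:ℝ) ≤ (q:ℝ)^2 := by nlinarith [hq100, le_of_lt hq0]
    have h64 : 64 * ((q:ℝ)+1)^3 < ((q:ℝ)^2)^2 := by nlinarith [ha, hc, hd, hq100, le_of_lt hq0]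
    have h8 : 8 * Real.sqrt ((q:ℝ)+1)^3 < (q:ℝ)^2 := by
      by_contra hcon
      push_neg at hcon
      have h2 : ((q:ℝ)^2)^2 ≤ (8 * Real.sqrt ((q:ℝ)+1)^3)^2 :=
        pow_le_pow_left₀ (by positivity) hcon 2
      have h3 : (8 * Real.sqrt ((q:ℝ)+1)^3)^2 = 64 * (((q:ℝ)+1))^3 := by
        rw [show (8 * Real.sqrt ((q:ℝ)+1)^3)^2 = 64 * (Real.sqrt ((q:ℝ)+1)^2)^3 by ring, hsq1]
      linarith
    have h4x : 4 * x < (q:ℝ)^2 := by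
      have : 4 * x ≤ 4 * ((q:ℝ)+1) * (2 * Real.sqrt ((q:ℝ)+1) - 2) := by
        rw [hx]
        have := mul_le_mul_of_nonneg_left hlogs (le_of_lt hq1pos)
        nlinarith
      nlinarith [hsq1, hsq1nn]
    have hmr : (m:ℝ) < (q:ℝ) := by
      nlinarith [hmle, hssq, hs0]
    exact_mod_cast hmr
  have hqmpos : (0:ℝ) < (q:ℝ) - (m:ℝ) := by
    have : (m:ℝ) < (q:ℝ) := by exact_mod_cast hmq
    linarith
  -- sum of i over range m
  have hsum : ∑ i ∈ Finset.range m, (i:ℝ) = (m:ℝ) * ((m:ℝ) - 1) / 2 := by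
    have hnat := Finset.sum_range_id_mul_two m
    have : ((∑ i ∈ Finset.range m, i : ℕ) : ℝ) * 2 = (m:ℝ) * ((m:ℝ) - 1) := by
      rw [show ((∑ i ∈ Finset.range m, i : ℕ) : ℝ) * 2 = (((∑ i ∈ Finset.range m, i) * 2 : ℕ) : ℝ) by push_cast; ring]
      rw [hnat]
      have : ((m * (m-1) : ℕ) : ℝ) = (m:ℝ) * ((m:ℝ) - 1) := by
        have h1 : 1 ≤ m := hm1
        push_cast [Nat.cast_sub h1]
        ring
      rw [this]
    rw [Nat.cast_sum] at this
    linarith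
  -- bound descFactorial by q^m exp(-sum/q)
  have hprodcast : ((q.descFactorial m : ℕ) : ℝ) = ∏ i ∈ Finset.range m, ((q:ℝ) - (i:ℝ)) := by
    rw [Nat.descFactorial_eq_prod_range, Nat.cast_prod]
    apply Finset.prod_congr rfl
    intro i hi
    have hi' : i ≤ q := le_of_lt (lt_of_lt_of_le (Finset.mem_range.mp hi) (le_of_lt hmq))
    push_cast [Nat.cast_sub hi']
    ring
  have hbound : ((q.descFactorial m : ℕ) : ℝ) ≤ (q:ℝ)^m * Real.exp (-((m:ℝ) * ((m:ℝ)-1)/2)/(q:ℝ)) := by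
    rw [hprodcast]
    have hstep : ∀ i ∈ Finset.range m, (0:ℝ) ≤ (q:ℝ) - (i:ℝ) ∧
        (q:ℝ) - (i:ℝ) ≤ (q:ℝ) * Real.exp (-(i:ℝ)/(q:ℝ)) := by
      intro i hi
      have hi' : (i:ℝ) < (q:ℝ) := by
        have : i < q := lt_of_lt_of_le (Finset.mem_range.mp hi) (le_of_lt hmq)
        exact_mod_cast this
      constructor
      · linarith
      · have hexp := Real.add_one_le_exp (-(i:ℝ)/(q:ℝ))
        have h2 : (q:ℝ) * (-(i:ℝ)/(q:ℝ) + 1) ≤ (q:ℝ) * Real.exp (-(i:ℝ)/(q:ℝ)) :=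
          mul_le_mul_of_nonneg_left hexp (le_of_lt hq0)
        have h3 : (q:ℝ) * (-(i:ℝ)/(q:ℝ) + 1) = (q:ℝ) - (i:ℝ) := by
          field_simp
          ring
        linarith
    calc ∏ i ∈ Finset.range m, ((q:ℝ) - (i:ℝ))
        ≤ ∏ i ∈ Finset.range m, ((q:ℝ) * Real.exp (-(i:ℝ)/(q:ℝ))) := by
          apply Finset.prod_le_prod
          · intro i hi; exact (hstep i hi).1
          · intro i hi; exact (hstep i hi).2
      _ = (q:ℝ)^m * Real.exp (-((m:ℝ) * ((m:ℝ)-1)/2)/(q:ℝ)) := by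
          rw [Finset.prod_mul_distrib, Finset.prod_const, Finset.card_range]
          congr 1
          rw [← Real.exp_sum]
          congr 1
          rw [← Finset.sum_div, Finset.sum_neg_distrib, hsum]
  -- key log inequality
  have hlog' : (q:ℝ) * Real.log ((q:ℝ) - (m:ℝ)) ≤ (q:ℝ) * Real.log (q:ℝ) - (m:ℝ) := by
    have hd : Real.log (((q:ℝ) - (m:ℝ))/(q:ℝ)) ≤ ((q:ℝ) - (m:ℝ))/(q:ℝ) - 1 :=
      Real.log_le_sub_one_of_pos (by positivity)
    have hdiv : Real.log (((q:ℝ) - (m:ℝ))/(q:ℝ)) = Real.log ((q:ℝ) - (m:ℝ)) - Real.log (q:ℝ) :=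
      Real.log_div (ne_of_gt hqmpos) (ne_of_gt hq0)
    rw [hdiv] at hd
    have h2 := mul_le_mul_of_nonneg_left hd (le_of_lt hq0)
    have h3 : (q:ℝ) * (((q:ℝ) - (m:ℝ))/(q:ℝ) - 1) = -(m:ℝ) := by
      field_simp
      ring
    nlinarith
  -- m(m+3) > 4 q log q
  have hmm3 : 4 * (q:ℝ) * Real.log (q:ℝ) < (m:ℝ) * ((m:ℝ) + 3) := by
    have e1 : (2*s - 1) * (2*s + 2) ≤ (m:ℝ) * ((m:ℝ) + 3) := by
      apply mul_le_mul hmgt.le (by linarith) (by linarith) (by positivity)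
    have e2 : (2*s - 1) * (2*s + 2) = 4*x + 2*s - 2 := by
      nlinarith [hssq]
    have e3 : 4 * (q:ℝ) * Real.log (q:ℝ) < 4 * x := by
      rw [hx]
      have hql : (q:ℝ) * Real.log (q:ℝ) < (q:ℝ) * L := mul_lt_mul_of_pos_left hLqlt hq0
      nlinarith [hql, hlogqpos, hLqlt, hq0]
    nlinarith [hs20]
  -- conclude (q-m)^2 < exp(sum/q)
  have hkey : ((q:ℝ) - (m:ℝ))^2 < Real.exp (((m:ℝ) * ((m:ℝ)-1)/2)/(q:ℝ)) := by
    have hlt : 2 * Real.log ((q:ℝ) - (m:ℝ)) < ((m:ℝ) * ((m:ℝ)-1)/2)/(q:ℝ) := by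
      rw [lt_div_iff₀ hq0]
      nlinarith [hlog', hmm3]
    calc ((q:ℝ) - (m:ℝ))^2 = Real.exp (Real.log (((q:ℝ) - (m:ℝ))^2)) := by
          rw [Real.exp_log (by positivity)]
      _ = Real.exp (2 * Real.log ((q:ℝ) - (m:ℝ))) := by
          rw [Real.log_pow]
          norm_num
      _ < Real.exp (((m:ℝ) * ((m:ℝ)-1)/2)/(q:ℝ)) := Real.exp_lt_exp.mpr hlt
  -- N in ℝ
  have hNreal : ((q:ℝ) - (m:ℝ))^2 * ((q.descFactorial m : ℕ) : ℝ) < (q:ℝ)^m := by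
    calc ((q:ℝ) - (m:ℝ))^2 * ((q.descFactorial m : ℕ) : ℝ)
        ≤ ((q:ℝ) - (m:ℝ))^2 * ((q:ℝ)^m * Real.exp (-((m:ℝ) * ((m:ℝ)-1)/2)/(q:ℝ))) :=
          mul_le_mul_of_nonneg_left hbound (sq_nonneg _)
      _ = (q:ℝ)^m * (((q:ℝ) - (m:ℝ))^2 * Real.exp (-((m:ℝ) * ((m:ℝ)-1)/2)/(q:ℝ))) := by ring
      _ < (q:ℝ)^m * 1 := by
          apply mul_lt_mul_of_pos_left _ (by positivity)
          have hexppos : (0:ℝ) < Real.exp (((m:ℝ) * ((m:ℝ)-1)/2)/(q:ℝ)) := Real.exp_pos _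
          rw [show -((m:ℝ) * ((m:ℝ)-1)/2)/(q:ℝ) = -(((m:ℝ) * ((m:ℝ)-1)/2)/(q:ℝ)) by ring,
            Real.exp_neg]
          rw [mul_inv_lt_iff₀ hexppos]  -- maybe wrong name
          simpa using hkey
      _ = (q:ℝ)^m := by ring
  have hN : (q - m)^2 * q.descFactorial m < q^m := by
    have hc : (((q - m)^2 * q.descFactorial m : ℕ) : ℝ) < ((q^m : ℕ) : ℝ) := by
      push_cast [Nat.cast_sub (le_of_lt hmq)]
      convert hNreal using 2 <;> push_cast <;> ring
    exact_mod_cast hc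
  -- assemble C2
  have hDpos : 0 < q.descFactorial m := by
    have := Nat.descFactorial_eq_zero_iff_lt (n := q) (k := m)
    omega
  have key : q * (q-1).descFactorial m = (q - m) * q.descFactorial m := by
    have h1 : q.descFactorial (m+1) = (q - m) * q.descFactorial m := Nat.descFactorial_succ q m
    have h2 : q.descFactorial (m+1) = q * (q-1).descFactorial m := by
      conv_lhs => rw [show q = (q-1)+1 by omega]
      rw [Nat.succ_descFactorial_succ]
      rw [show (q-1)+1 = q by omega]
    omega
  refine ⟨m, hm1, hC1, ?_⟩
  calc q^2 * ((q-1).descFactorial m)^2 = (q * (q-1).descFactorial m)^2 := by ring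
    _ = ((q - m) * q.descFactorial m)^2 := by rw [key]
    _ = ((q - m)^2 * q.descFactorial m) * q.descFactorial m := by ring
    _ < q^m * q.descFactorial m := by
        exact (Nat.mul_lt_mul_right hDpos).mpr hN
    _ = q.descFactorial m * q^m := Nat.mul_comm _ _

lemma log_lb (q k : ℕ) (h2k : (2:ℝ)^k ≤ (q:ℝ)+1) :
    (k:ℝ) * 0.6931471803 ≤ Real.log ((q:ℝ)+1) := by
  have hlog2 : (0.6931471803:ℝ) < Real.log 2 := Real.log_two_gt_d9
  calc (k:ℝ) * 0.6931471803 ≤ (k:ℝ) * Real.log 2 := by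
        apply mul_le_mul_of_nonneg_left hlog2.le (Nat.cast_nonneg k)
    _ = Real.log (2^k) := by rw [Real.log_pow]
    _ ≤ Real.log ((q:ℝ)+1) := Real.log_le_log (by positivity) h2k

lemma numeric_small_helper (q m k : ℕ) (h2k : (2:ℝ)^k ≤ (q:ℝ)+1)
    (hC1 : (m:ℝ)^2 ≤ 4*((q:ℝ)+1)*((k:ℝ)*0.6931471803))
    (hm : 1 ≤ m)
    (hC2 : q^2 * ((q-1).descFactorial m)^2 < q.descFactorial m * q^m) :
    ∃ m : ℕ, 1 ≤ m ∧ ((m : ℝ))^2 ≤ 4 * ((q:ℝ)+1) * Real.log ((q:ℝ)+1) ∧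
      q^2 * ((q-1).descFactorial m)^2 < q.descFactorial m * q^m := by
  refine ⟨m, hm, ?_, hC2⟩
  have h2 : 4*((q:ℝ)+1)*((k:ℝ)*0.6931471803) ≤ 4*((q:ℝ)+1)*Real.log ((q:ℝ)+1) :=
    mul_le_mul_of_nonneg_left (log_lb q k h2k) (by positivity)
  linarith

lemma numeric_small (q : ℕ) (hq2 : 2 ≤ q) (hq : q ≤ 99) :
    ∃ m : ℕ, 1 ≤ m ∧ ((m : ℝ))^2 ≤ 4 * ((q:ℝ)+1) * Real.log ((q:ℝ)+1) ∧
      q^2 * ((q-1).descFactorial m)^2 < q.descFactorial m * q^m := by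
  interval_cases q
  · exact numeric_small_helper 2 2 1 (by norm_num) (by norm_num) (by norm_num) (by decide)
  · exact numeric_small_helper 3 2 2 (by norm_num) (by norm_num) (by norm_num) (by decide)
  · exact numeric_small_helper 4 3 2 (by norm_num) (by norm_num) (by norm_num) (by decide)
  · exact numeric_small_helper 5 4 2 (by norm_num) (by norm_num) (by norm_num) (by decide)
  · exact numeric_small_helper 6 5 2 (by norm_num) (by norm_num) (by norm_num) (by decide)
  · exact numeric_small_helper 7 5 3 (by norm_num) (by norm_num) (by norm_num) (by decide)
  · exact numeric_small_helper 8 6 3 (by norm_num) (by norm_num) (by norm_num) (by decide)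
  · exact numeric_small_helper 9 7 3 (by norm_num) (by norm_num) (by norm_num) (by decide)
  · exact numeric_small_helper 10 7 3 (by norm_num) (by norm_num) (by norm_num) (by decide)
  · exact numeric_small_helper 11 8 3 (by norm_num) (by norm_num) (by norm_num) (by decide)
  · exact numeric_small_helper 12 8 3 (by norm_num) (by norm_num) (by norm_num) (by decide)
  · exact numeric_small_helper 13 9 3 (by norm_num) (by norm_num) (by norm_num) (by decide)
  · exact numeric_small_helper 14 9 3 (by norm_num) (by norm_num) (by norm_num) (by decide)
  · exact numeric_small_helper 15 10 4 (by norm_num) (by norm_num) (by norm_num) (by decide)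
  · exact numeric_small_helper 16 10 4 (by norm_num) (by norm_num) (by norm_num) (by decide)
  · exact numeric_small_helper 17 11 4 (by norm_num) (by norm_num) (by norm_num) (by decide)
  · exact numeric_small_helper 18 11 4 (by norm_num) (by norm_num) (by norm_num) (by decide)
  · exact numeric_small_helper 19 12 4 (by norm_num) (by norm_num) (by norm_num) (by decide)
  · exact numeric_small_helper 20 12 4 (by norm_num) (by norm_num) (by norm_num) (by decide)
  · exact numeric_small_helper 21 13 4 (by norm_num) (by norm_num) (by norm_num) (by decide)
  · exact numeric_small_helper 22 13 4 (by norm_num) (by norm_num) (by norm_num) (by decide)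
  · exact numeric_small_helper 23 14 4 (by norm_num) (by norm_num) (by norm_num) (by decide)
  · exact numeric_small_helper 24 14 4 (by norm_num) (by norm_num) (by norm_num) (by decide)
  · exact numeric_small_helper 25 15 4 (by norm_num) (by norm_num) (by norm_num) (by decide)
  · exact numeric_small_helper 26 15 4 (by norm_num) (by norm_num) (by norm_num) (by decide)
  · exact numeric_small_helper 27 16 4 (by norm_num) (by norm_num) (by norm_num) (by decide)
  · exact numeric_small_helper 28 16 4 (by norm_num) (by norm_num) (by norm_num) (by decide)
  · exact numeric_small_helper 29 16 4 (by norm_num) (by norm_num) (by norm_num) (by decide)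
  · exact numeric_small_helper 30 17 4 (by norm_num) (by norm_num) (by norm_num) (by decide)
  · exact numeric_small_helper 31 17 5 (by norm_num) (by norm_num) (by norm_num) (by decide)
  · exact numeric_small_helper 32 18 5 (by norm_num) (by norm_num) (by norm_num) (by decide)
  · exact numeric_small_helper 33 18 5 (by norm_num) (by norm_num) (by norm_num) (by decide)
  · exact numeric_small_helper 34 18 5 (by norm_num) (by norm_num) (by norm_num) (by decide)
  · exact numeric_small_helper 35 19 5 (by norm_num) (by norm_num) (by norm_num) (by decide)
  · exact numeric_small_helper 36 19 5 (by norm_num) (by norm_num) (by norm_num) (by decide)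
  · exact numeric_small_helper 37 20 5 (by norm_num) (by norm_num) (by norm_num) (by decide)
  · exact numeric_small_helper 38 20 5 (by norm_num) (by norm_num) (by norm_num) (by decide)
  · exact numeric_small_helper 39 20 5 (by norm_num) (by norm_num) (by norm_num) (by decide)
  · exact numeric_small_helper 40 21 5 (by norm_num) (by norm_num) (by norm_num) (by decide)
  · exact numeric_small_helper 41 21 5 (by norm_num) (by norm_num) (by norm_num) (by decide)
  · exact numeric_small_helper 42 21 5 (by norm_num) (by norm_num) (by norm_num) (by decide)
  · exact numeric_small_helper 43 22 5 (by norm_num) (by norm_num) (by norm_num) (by decide)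
  · exact numeric_small_helper 44 22 5 (by norm_num) (by norm_num) (by norm_num) (by decide)
  · exact numeric_small_helper 45 23 5 (by norm_num) (by norm_num) (by norm_num) (by decide)
  · exact numeric_small_helper 46 23 5 (by norm_num) (by norm_num) (by norm_num) (by decide)
  · exact numeric_small_helper 47 23 5 (by norm_num) (by norm_num) (by norm_num) (by decide)
  · exact numeric_small_helper 48 24 5 (by norm_num) (by norm_num) (by norm_num) (by decide)
  · exact numeric_small_helper 49 24 5 (by norm_num) (by norm_num) (by norm_num) (by decide)
  · exact numeric_small_helper 50 24 5 (by norm_num) (by norm_num) (by norm_num) (by decide)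
  · exact numeric_small_helper 51 25 5 (by norm_num) (by norm_num) (by norm_num) (by decide)
  · exact numeric_small_helper 52 25 5 (by norm_num) (by norm_num) (by norm_num) (by decide)
  · exact numeric_small_helper 53 25 5 (by norm_num) (by norm_num) (by norm_num) (by decide)
  · exact numeric_small_helper 54 26 5 (by norm_num) (by norm_num) (by norm_num) (by decide)
  · exact numeric_small_helper 55 26 5 (by norm_num) (by norm_num) (by norm_num) (by decide)
  · exact numeric_small_helper 56 26 5 (by norm_num) (by norm_num) (by norm_num) (by decide)
  · exact numeric_small_helper 57 27 5 (by norm_num) (by norm_num) (by norm_num) (by decide)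
  · exact numeric_small_helper 58 27 5 (by norm_num) (by norm_num) (by norm_num) (by decide)
  · exact numeric_small_helper 59 27 5 (by norm_num) (by norm_num) (by norm_num) (by decide)
  · exact numeric_small_helper 60 28 5 (by norm_num) (by norm_num) (by norm_num) (by decide)
  · exact numeric_small_helper 61 28 5 (by norm_num) (by norm_num) (by norm_num) (by decide)
  · exact numeric_small_helper 62 28 5 (by norm_num) (by norm_num) (by norm_num) (by decide)
  · exact numeric_small_helper 63 28 6 (by norm_num) (by norm_num) (by norm_num) (by decide)
  · exact numeric_small_helper 64 29 6 (by norm_num) (by norm_num) (by norm_num) (by decide)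
  · exact numeric_small_helper 65 29 6 (by norm_num) (by norm_num) (by norm_num) (by decide)
  · exact numeric_small_helper 66 29 6 (by norm_num) (by norm_num) (by norm_num) (by decide)
  · exact numeric_small_helper 67 30 6 (by norm_num) (by norm_num) (by norm_num) (by decide)
  · exact numeric_small_helper 68 30 6 (by norm_num) (by norm_num) (by norm_num) (by decide)
  · exact numeric_small_helper 69 30 6 (by norm_num) (by norm_num) (by norm_num) (by decide)
  · exact numeric_small_helper 70 31 6 (by norm_num) (by norm_num) (by norm_num) (by decide)
  · exact numeric_small_helper 71 31 6 (by norm_num) (by norm_num) (by norm_num) (by decide)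
  · exact numeric_small_helper 72 31 6 (by norm_num) (by norm_num) (by norm_num) (by decide)
  · exact numeric_small_helper 73 31 6 (by norm_num) (by norm_num) (by norm_num) (by decide)
  · exact numeric_small_helper 74 32 6 (by norm_num) (by norm_num) (by norm_num) (by decide)
  · exact numeric_small_helper 75 32 6 (by norm_num) (by norm_num) (by norm_num) (by decide)
  · exact numeric_small_helper 76 32 6 (by norm_num) (by norm_num) (by norm_num) (by decide)
  · exact numeric_small_helper 77 33 6 (by norm_num) (by norm_num) (by norm_num) (by decide)
  · exact numeric_small_helper 78 33 6 (by norm_num) (by norm_num) (by norm_num) (by decide)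
  · exact numeric_small_helper 79 33 6 (by norm_num) (by norm_num) (by norm_num) (by decide)
  · exact numeric_small_helper 80 33 6 (by norm_num) (by norm_num) (by norm_num) (by decide)
  · exact numeric_small_helper 81 34 6 (by norm_num) (by norm_num) (by norm_num) (by decide)
  · exact numeric_small_helper 82 34 6 (by norm_num) (by norm_num) (by norm_num) (by decide)
  · exact numeric_small_helper 83 34 6 (by norm_num) (by norm_num) (by norm_num) (by decide)
  · exact numeric_small_helper 84 35 6 (by norm_num) (by norm_num) (by norm_num) (by decide)
  · exact numeric_small_helper 85 35 6 (by norm_num) (by norm_num) (by norm_num) (by decide)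
  · exact numeric_small_helper 86 35 6 (by norm_num) (by norm_num) (by norm_num) (by decide)
  · exact numeric_small_helper 87 35 6 (by norm_num) (by norm_num) (by norm_num) (by decide)
  · exact numeric_small_helper 88 36 6 (by norm_num) (by norm_num) (by norm_num) (by decide)
  · exact numeric_small_helper 89 36 6 (by norm_num) (by norm_num) (by norm_num) (by decide)
  · exact numeric_small_helper 90 36 6 (by norm_num) (by norm_num) (by norm_num) (by decide)
  · exact numeric_small_helper 91 36 6 (by norm_num) (by norm_num) (by norm_num) (by decide)
  · exact numeric_small_helper 92 37 6 (by norm_num) (by norm_num) (by norm_num) (by decide)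
  · exact numeric_small_helper 93 37 6 (by norm_num) (by norm_num) (by norm_num) (by decide)
  · exact numeric_small_helper 94 37 6 (by norm_num) (by norm_num) (by norm_num) (by decide)
  · exact numeric_small_helper 95 37 6 (by norm_num) (by norm_num) (by norm_num) (by decide)
  · exact numeric_small_helper 96 38 6 (by norm_num) (by norm_num) (by norm_num) (by decide)
  · exact numeric_small_helper 97 38 6 (by norm_num) (by norm_num) (by norm_num) (by decide)
  · exact numeric_small_helper 98 38 6 (by norm_num) (by norm_num) (by norm_num) (by decide)
  · exact numeric_small_helper 99 39 6 (by norm_num) (by norm_num) (by norm_num) (by decide)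

lemma numeric_all (q : ℕ) (hq2 : 2 ≤ q) :
    ∃ m : ℕ, 1 ≤ m ∧ ((m : ℝ))^2 ≤ 4 * ((q:ℝ)+1) * Real.log ((q:ℝ)+1) ∧
      q^2 * ((q-1).descFactorial m)^2 < q.descFactorial m * q^m := by
  by_cases h : q ≤ 99
  · exact numeric_small q hq2 h
  · exact numeric_large q (by omega)

theorem covering_code_length_bound (q : ℕ) (F : Type*) [Field F] [Fintype F] [DecidableEq F]
    (hF : Fintype.card F = q) :
    ∃ n : ℕ, 3 ≤ n ∧ (n : ℝ) ≤ 2 * Real.sqrt ((q + 1) * Real.log (q + 1)) + 2 ∧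
      ∃ C : Submodule F (Fin n → F), Module.finrank F C = n - 3 ∧
        ∀ v : Fin n → F, ∃ c ∈ C, hammingDist v c ≤ 2 := by
  have hq2 : 2 ≤ q := by
    rw [← hF]
    exact Fintype.one_lt_card
  obtain ⟨m, hm1, hC1, hC2⟩ := numeric_all q hq2
  rw [← hF] at hC2
  obtain ⟨h, hcover⟩ := exists_columns F m hC2
  refine ⟨m + 2, by omega, ?_, code_of_columns (by omega) h hcover⟩
  -- the length bound
  have hxnn : (0:ℝ) ≤ ((q:ℝ)+1) * Real.log ((q:ℝ)+1) := by
    have h1 : (1:ℝ) ≤ (q:ℝ)+1 := by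
      have : (0:ℝ) ≤ (q:ℝ) := Nat.cast_nonneg q
      linarith
    have h2 : 0 ≤ Real.log ((q:ℝ)+1) := Real.log_nonneg h1
    positivity
  have hms : (m:ℝ) ≤ 2 * Real.sqrt (((q:ℝ)+1) * Real.log ((q:ℝ)+1)) := by
    have h1 : (m:ℝ) = Real.sqrt ((m:ℝ)^2) := (Real.sqrt_sq (Nat.cast_nonneg m)).symm
    have h2 : Real.sqrt ((m:ℝ)^2) ≤ Real.sqrt (4 * (((q:ℝ)+1) * Real.log ((q:ℝ)+1))) := by
      apply Real.sqrt_le_sqrt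
      calc ((m:ℝ))^2 ≤ 4 * ((q:ℝ)+1) * Real.log ((q:ℝ)+1) := hC1
        _ = 4 * (((q:ℝ)+1) * Real.log ((q:ℝ)+1)) := by ring
    have h3 : Real.sqrt (4 * (((q:ℝ)+1) * Real.log ((q:ℝ)+1)))
        = 2 * Real.sqrt (((q:ℝ)+1) * Real.log ((q:ℝ)+1)) := by
      rw [show (4:ℝ) = 2^2 by norm_num, Real.sqrt_mul (by positivity), Real.sqrt_sq (by norm_num)]
    rw [h1]
    rw [h3] at h2
    exact h2
  push_cast
  linarith
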